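/- Assume in addition that d_l ≥ d_t. Then the dispersion tensor is Lipschitz on ℝ^n \ {0}: for all nonzero u, v ∈ ℝ^n, the operator norm satisfies ‖D(u) − D(v)‖ ≤ 3 d_l |u − v|; in particular the Lipschitz condition |D(u) − D(v)| ≤ C|u − v| assumed in the error analysis holds with C = 3 d_l. -/

import Mathlib

open Matrix

noncomputable def projMat {n : ℕ} (u : EuclideanSpace ℝ (Fin n)) :
    Matrix (Fin n) (Fin n) ℝ :=
  Matrix.of fun i j => u i * u j / ‖u‖ ^ 2

noncomputable def dispersion {n : ℕ} (φ dm dl dt : ℝ)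
    (u : EuclideanSpace ℝ (Fin n)) : Matrix (Fin n) (Fin n) ℝ :=
  (φ * dm) • (1 : Matrix (Fin n) (Fin n) ℝ)
    + (dl * ‖u‖) • projMat u
    + (dt * ‖u‖) • ((1 : Matrix (Fin n) (Fin n) ℝ) - projMat u)

noncomputable def l2OpNorm {n : ℕ} (M : Matrix (Fin n) (Fin n) ℝ) : ℝ :=
  ‖LinearMap.toContinuousLinearMap (Matrix.toEuclideanLin M)‖

lemma l2OpNorm_smul {n : ℕ} (c : ℝ) (M : Matrix (Fin n) (Fin n) ℝ) :
    l2OpNorm (c • M) = |c| * l2OpNorm M := by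
  unfold l2OpNorm
  rw [_root_.map_smul, _root_.map_smul]
  exact (norm_smul c (LinearMap.toContinuousLinearMap (Matrix.toEuclideanLin M))).trans
    (by rw [Real.norm_eq_abs])

lemma l2OpNorm_add_le {n : ℕ} (A B : Matrix (Fin n) (Fin n) ℝ) :
    l2OpNorm (A + B) ≤ l2OpNorm A + l2OpNorm B := by
  unfold l2OpNorm
  rw [map_add, map_add]
  exact norm_add_le _ _

lemma l2OpNorm_neg {n : ℕ} (A : Matrix (Fin n) (Fin n) ℝ) :
    l2OpNorm (-A) = l2OpNorm A := by
  unfold l2OpNorm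
  rw [map_neg, map_neg, norm_neg]

lemma l2OpNorm_one_le {n : ℕ} : l2OpNorm (1 : Matrix (Fin n) (Fin n) ℝ) ≤ 1 := by
  unfold l2OpNorm
  apply ContinuousLinearMap.opNorm_le_bound _ zero_le_one
  intro x
  have h : (LinearMap.toContinuousLinearMap (Matrix.toEuclideanLin (1 : Matrix (Fin n) (Fin n) ℝ))) x = x := by
    apply PiLp.ext
    intro i
    show ((1 : Matrix (Fin n) (Fin n) ℝ) *ᵥ (x : Fin n → ℝ)) i = x i
    rw [Matrix.one_mulVec]
  rw [h, one_mul]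

lemma l2OpNorm_vecMulVec_le {n : ℕ} (a b : EuclideanSpace ℝ (Fin n)) :
    l2OpNorm (Matrix.vecMulVec a b) ≤ ‖a‖ * ‖b‖ := by
  unfold l2OpNorm
  apply ContinuousLinearMap.opNorm_le_bound _ (by positivity)
  intro x
  have h : (LinearMap.toContinuousLinearMap (Matrix.toEuclideanLin (Matrix.vecMulVec a b))) x
      = (inner ℝ b x : ℝ) • a := by
    apply PiLp.ext
    intro i
    show (Matrix.vecMulVec a b *ᵥ (x : Fin n → ℝ)) i = (inner ℝ b x : ℝ) * a i
    simp [Matrix.vecMulVec, Matrix.mulVec, dotProduct, PiLp.inner_apply,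
      Finset.sum_mul, Finset.mul_sum]
    congr 1
    funext j
    ring
  rw [h, norm_smul]
  have := abs_real_inner_le_norm b x
  calc ‖(inner ℝ b x : ℝ)‖ * ‖a‖ ≤ (‖b‖ * ‖x‖) * ‖a‖ := by
        apply mul_le_mul_of_nonneg_right _ (norm_nonneg a)
        rwa [Real.norm_eq_abs]
    _ = ‖a‖ * ‖b‖ * ‖x‖ := by ring

lemma key {n : ℕ} (u v : EuclideanSpace ℝ (Fin n)) (hu : u ≠ 0) (hv : v ≠ 0)
    (hle : ‖v‖ ≤ ‖u‖) :
    l2OpNorm (‖u‖⁻¹ • Matrix.vecMulVec (u : Fin n → ℝ) u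
      - ‖v‖⁻¹ • Matrix.vecMulVec (v : Fin n → ℝ) v) ≤ 3 * ‖u - v‖ := by
  have hun : (0:ℝ) < ‖u‖ := norm_pos_iff.mpr hu
  have hvn : (0:ℝ) < ‖v‖ := norm_pos_iff.mpr hv
  have hdecomp : ‖u‖⁻¹ • Matrix.vecMulVec (u : Fin n → ℝ) u
      - ‖v‖⁻¹ • Matrix.vecMulVec (v : Fin n → ℝ) v
      = ‖u‖⁻¹ • Matrix.vecMulVec ((u - v : EuclideanSpace ℝ (Fin n)) : Fin n → ℝ) u
        + (‖u‖⁻¹ • Matrix.vecMulVec (v : Fin n → ℝ) ((u - v : EuclideanSpace ℝ (Fin n)) : Fin n → ℝ)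
          + (‖u‖⁻¹ - ‖v‖⁻¹) • Matrix.vecMulVec (v : Fin n → ℝ) v) := by
    ext i j
    simp [Matrix.vecMulVec, Matrix.smul_apply, Matrix.add_apply, Matrix.sub_apply,
      PiLp.sub_apply]
    ring
  rw [hdecomp]
  have h1 : l2OpNorm (‖u‖⁻¹ • Matrix.vecMulVec ((u - v : EuclideanSpace ℝ (Fin n)) : Fin n → ℝ) u)
      ≤ ‖u - v‖ := by
    rw [l2OpNorm_smul]
    calc |‖u‖⁻¹| * l2OpNorm (Matrix.vecMulVec ((u - v : EuclideanSpace ℝ (Fin n)) : Fin n → ℝ) u)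
        ≤ ‖u‖⁻¹ * (‖u - v‖ * ‖u‖) := by
          rw [abs_of_nonneg (by positivity)]
          exact mul_le_mul_of_nonneg_left (l2OpNorm_vecMulVec_le _ _) (by positivity)
      _ = ‖u - v‖ := by field_simp
  have h2 : l2OpNorm (‖u‖⁻¹ • Matrix.vecMulVec (v : Fin n → ℝ) ((u - v : EuclideanSpace ℝ (Fin n)) : Fin n → ℝ))
      ≤ ‖u - v‖ := by
    rw [l2OpNorm_smul]
    calc |‖u‖⁻¹| * l2OpNorm (Matrix.vecMulVec (v : Fin n → ℝ) ((u - v : EuclideanSpace ℝ (Fin n)) : Fin n → ℝ))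
        ≤ ‖u‖⁻¹ * (‖v‖ * ‖u - v‖) := by
          rw [abs_of_nonneg (by positivity)]
          exact mul_le_mul_of_nonneg_left (l2OpNorm_vecMulVec_le _ _) (by positivity)
      _ ≤ ‖u‖⁻¹ * (‖u‖ * ‖u - v‖) := by
          apply mul_le_mul_of_nonneg_left _ (by positivity)
          exact mul_le_mul_of_nonneg_right hle (norm_nonneg _)
      _ = ‖u - v‖ := by field_simp
  have h3 : l2OpNorm ((‖u‖⁻¹ - ‖v‖⁻¹) • Matrix.vecMulVec (v : Fin n → ℝ) v) ≤ ‖u - v‖ := by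
    rw [l2OpNorm_smul]
    have habs : |‖u‖⁻¹ - ‖v‖⁻¹| = (‖u‖ - ‖v‖) / (‖u‖ * ‖v‖) := by
      rw [abs_of_nonpos (by
        simp only [sub_nonpos]
        exact inv_anti₀ hvn hle)]
      field_simp
      ring
    calc |‖u‖⁻¹ - ‖v‖⁻¹| * l2OpNorm (Matrix.vecMulVec (v : Fin n → ℝ) v)
        ≤ (‖u‖ - ‖v‖) / (‖u‖ * ‖v‖) * (‖v‖ * ‖v‖) := by
          rw [habs]
          exact mul_le_mul_of_nonneg_left (l2OpNorm_vecMulVec_le _ _)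
            (div_nonneg (by linarith) (by positivity))
      _ = (‖u‖ - ‖v‖) * (‖v‖ / ‖u‖) := by field_simp
      _ ≤ ‖u - v‖ * 1 := by
          apply mul_le_mul
          · calc ‖u‖ - ‖v‖ ≤ |‖u‖ - ‖v‖| := le_abs_self _
              _ ≤ ‖u - v‖ := abs_norm_sub_norm_le u v
          · rw [div_le_one hun]; exact hle
          · positivity
          · positivity
      _ = ‖u - v‖ := mul_one _
  calc l2OpNorm _ ≤ l2OpNorm (‖u‖⁻¹ • Matrix.vecMulVec ((u - v : EuclideanSpace ℝ (Fin n)) : Fin n → ℝ) u)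
        + l2OpNorm (‖u‖⁻¹ • Matrix.vecMulVec (v : Fin n → ℝ) ((u - v : EuclideanSpace ℝ (Fin n)) : Fin n → ℝ)
          + (‖u‖⁻¹ - ‖v‖⁻¹) • Matrix.vecMulVec (v : Fin n → ℝ) v) := l2OpNorm_add_le _ _
    _ ≤ ‖u - v‖ + (‖u - v‖ + ‖u - v‖) := by
        gcongr
        exact le_trans (l2OpNorm_add_le _ _) (add_le_add h2 h3)
    _ = 3 * ‖u - v‖ := by ring

lemma key' {n : ℕ} (u v : EuclideanSpace ℝ (Fin n)) (hu : u ≠ 0) (hv : v ≠ 0) :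
    l2OpNorm (‖u‖⁻¹ • Matrix.vecMulVec (u : Fin n → ℝ) u
      - ‖v‖⁻¹ • Matrix.vecMulVec (v : Fin n → ℝ) v) ≤ 3 * ‖u - v‖ := by
  rcases le_total ‖v‖ ‖u‖ with h | h
  · exact key u v hu hv h
  · rw [show (‖u‖⁻¹ • Matrix.vecMulVec (u : Fin n → ℝ) u
      - ‖v‖⁻¹ • Matrix.vecMulVec (v : Fin n → ℝ) v)
      = -(‖v‖⁻¹ • Matrix.vecMulVec (v : Fin n → ℝ) v
        - ‖u‖⁻¹ • Matrix.vecMulVec (u : Fin n → ℝ) u) by rw [neg_sub],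
      l2OpNorm_neg, norm_sub_rev]
    exact key v u hv hu h

lemma smul_projMat {n : ℕ} (u : EuclideanSpace ℝ (Fin n)) (hu : u ≠ 0) :
    ‖u‖ • projMat u = ‖u‖⁻¹ • Matrix.vecMulVec (u : Fin n → ℝ) u := by
  have hun : (0:ℝ) < ‖u‖ := norm_pos_iff.mpr hu
  ext i j
  simp [projMat, Matrix.vecMulVec, Matrix.smul_apply]
  field_simp

/-- If `d_l ≥ d_t` then the dispersion tensor is Lipschitz on `ℝⁿ \ {0}`:
`‖D(u) − D(v)‖ ≤ 3 d_l |u − v|` in the operator norm, so the Lipschitz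
condition `|D(u) − D(v)| ≤ C |u − v|` holds with `C = 3 d_l`. -/
theorem dispersion_lipschitz
    (n : ℕ) (hn : 1 ≤ n) (φ dm dl dt : ℝ)
    (hφ : 0 < φ) (hdm : 0 < dm) (hdl : 0 ≤ dl) (hdt : 0 ≤ dt)
    (hlt : dt ≤ dl)
    (u v : EuclideanSpace ℝ (Fin n)) (hu : u ≠ 0) (hv : v ≠ 0) :
    l2OpNorm (dispersion φ dm dl dt u - dispersion φ dm dl dt v)
      ≤ 3 * dl * ‖u - v‖ := by
  have hdiff : dispersion φ dm dl dt u - dispersion φ dm dl dt v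
      = (dt * (‖u‖ - ‖v‖)) • (1 : Matrix (Fin n) (Fin n) ℝ)
        + (dl - dt) • (‖u‖ • projMat u - ‖v‖ • projMat v) := by
    unfold dispersion
    ext i j
    simp [Matrix.add_apply, Matrix.sub_apply, Matrix.smul_apply, Matrix.one_apply]
    by_cases h : i = j <;> simp [h] <;> ring
  rw [hdiff, smul_projMat u hu, smul_projMat v hv]
  have hb1 : l2OpNorm ((dt * (‖u‖ - ‖v‖)) • (1 : Matrix (Fin n) (Fin n) ℝ))
      ≤ dt * ‖u - v‖ := by
    rw [l2OpNorm_smul]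
    calc |dt * (‖u‖ - ‖v‖)| * l2OpNorm (1 : Matrix (Fin n) (Fin n) ℝ)
        ≤ |dt * (‖u‖ - ‖v‖)| * 1 := by
          apply mul_le_mul_of_nonneg_left l2OpNorm_one_le (abs_nonneg _)
      _ = |dt| * |‖u‖ - ‖v‖| := by rw [mul_one, abs_mul]
      _ ≤ dt * ‖u - v‖ := by
          rw [abs_of_nonneg hdt]
          exact mul_le_mul_of_nonneg_left (abs_norm_sub_norm_le u v) hdt
  have hb2 : l2OpNorm ((dl - dt) • (‖u‖⁻¹ • Matrix.vecMulVec (u : Fin n → ℝ) u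
        - ‖v‖⁻¹ • Matrix.vecMulVec (v : Fin n → ℝ) v))
      ≤ (dl - dt) * (3 * ‖u - v‖) := by
    rw [l2OpNorm_smul, abs_of_nonneg (by linarith)]
    exact mul_le_mul_of_nonneg_left (key' u v hu hv) (by linarith)
  calc l2OpNorm _ ≤ _ + _ := l2OpNorm_add_le _ _
    _ ≤ dt * ‖u - v‖ + (dl - dt) * (3 * ‖u - v‖) := add_le_add hb1 hb2
    _ = 3 * dl * ‖u - v‖ - 2 * (dt * ‖u - v‖) := by ring
    _ ≤ 3 * dl * ‖u - v‖ := by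
        have : 0 ≤ dt * ‖u - v‖ := mul_nonneg hdt (norm_nonneg _)
        linarith
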